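/- For naturals n, k with n ≥ k ≥ 1, the coefficient of z^n in the polynomial/power series (sin z)^k equals (1+(−1)^(n−k))/(2^k · n!) · ∑_{m=0}^{⌊k/2⌋} C(k,m)·(2m−k)^n·(−1)^((n+k)/2 − m), where the expression is interpreted as 0 when n−k is odd. -/

import Mathlib

open PowerSeries Complex Finset

lemma rescale_exp_pow (a : ℂ) (m : ℕ) :
    (PowerSeries.rescale a (PowerSeries.exp ℂ)) ^ m
      = PowerSeries.rescale (m * a) (PowerSeries.exp ℂ) := by
  induction m with
  | zero => simp [PowerSeries.rescale_zero]
  | succ m ih =>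
      rw [pow_succ, ih, PowerSeries.exp_mul_exp_eq_exp_add]
      push_cast
      ring_nf

lemma two_I_sin :
    PowerSeries.rescale I (PowerSeries.exp ℂ) - PowerSeries.rescale (-I) (PowerSeries.exp ℂ)
      = PowerSeries.C (2 * I) * PowerSeries.sin ℂ := by
  ext n
  rw [map_sub, PowerSeries.coeff_rescale, PowerSeries.coeff_rescale, PowerSeries.coeff_C_mul,
    PowerSeries.coeff_exp, PowerSeries.sin, PowerSeries.coeff_mk]
  rcases Nat.even_or_odd n with he | ho
  · rw [if_pos he, he.neg_pow]
    ring
  · rw [if_neg (Nat.not_even_iff_odd.mpr ho), ho.neg_pow]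
    have h1 : (I : ℂ) ^ n = I * (-1) ^ (n / 2) := by
      obtain ⟨t, ht⟩ := ho
      subst ht
      rw [pow_succ, pow_mul, I_sq]
      have h2 : (2 * t + 1) / 2 = t := by omega
      rw [h2]; ring
    rw [h1]
    simp only [map_div₀, map_pow, map_neg, map_one, map_natCast]
    ring

lemma coeff_sin_pow_complex (n k : ℕ) :
    (2 * I) ^ k * PowerSeries.coeff n (PowerSeries.sin ℂ ^ k)
      = I ^ n * ((n.factorial : ℂ))⁻¹ *
          ∑ m ∈ Finset.range (k + 1),
            (k.choose m : ℂ) * (-1) ^ (m + k) * (2 * (m : ℂ) - k) ^ n := by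
  have hpow : (PowerSeries.C (2 * I) * PowerSeries.sin ℂ) ^ k
      = ∑ m ∈ Finset.range (k + 1),
          PowerSeries.C ((-1) ^ (m + k) * (k.choose m : ℂ)) *
            PowerSeries.rescale ((2 * (m : ℂ) - k) * I) (PowerSeries.exp ℂ) := by
    rw [← two_I_sin, sub_pow]
    refine Finset.sum_congr rfl fun m hm => ?_
    have hm' : m ≤ k := Nat.lt_succ_iff.mp (Finset.mem_range.mp hm)
    rw [rescale_exp_pow, rescale_exp_pow]
    have hmk : (m : ℂ) * I + ((k - m : ℕ) : ℂ) * (-I) = (2 * (m : ℂ) - k) * I := by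
      rw [Nat.cast_sub hm']; ring
    trans ((-1 : ℂ⟦X⟧) ^ (m + k) * ((k.choose m : ℕ) : ℂ⟦X⟧)) *
      (PowerSeries.rescale ((m : ℂ) * I) (PowerSeries.exp ℂ) *
        PowerSeries.rescale (((k - m : ℕ) : ℂ) * (-I)) (PowerSeries.exp ℂ))
    · ring
    · rw [PowerSeries.exp_mul_exp_eq_exp_add, hmk]
      simp only [map_mul, map_pow, map_neg, map_one, map_natCast]
  have hC : PowerSeries.C ((2 * I) ^ k) * PowerSeries.sin ℂ ^ k
      = (PowerSeries.C (2 * I) * PowerSeries.sin ℂ) ^ k := by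
    rw [map_pow, ← mul_pow]
  calc (2 * I) ^ k * PowerSeries.coeff n (PowerSeries.sin ℂ ^ k)
      = PowerSeries.coeff n (PowerSeries.C ((2 * I) ^ k) * PowerSeries.sin ℂ ^ k) := by
        rw [PowerSeries.coeff_C_mul]
    _ = I ^ n * ((n.factorial : ℂ))⁻¹ *
          ∑ m ∈ Finset.range (k + 1),
            (k.choose m : ℂ) * (-1) ^ (m + k) * (2 * (m : ℂ) - k) ^ n := by
        rw [hC, hpow, map_sum, Finset.mul_sum]
        refine Finset.sum_congr rfl fun m _ => ?_
        rw [PowerSeries.coeff_C_mul, PowerSeries.coeff_rescale, PowerSeries.coeff_exp]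
        simp only [map_div₀, map_one, map_natCast, mul_pow]
        ring

theorem coeff_pow_sin (n k : ℕ) (hk : 1 ≤ k) (hkn : k ≤ n) :
    PowerSeries.coeff n ((PowerSeries.sin ℝ) ^ k)
      = (1 + (-1 : ℝ) ^ (n - k)) / (2 ^ k * (Nat.factorial n : ℝ)) *
          ∑ m ∈ Finset.range (k / 2 + 1),
            (k.choose m : ℝ) * (2 * (m : ℝ) - (k : ℝ)) ^ n * (-1) ^ ((n + k) / 2 - m) := by
  have hfact : (n.factorial : ℂ) ≠ 0 := Nat.cast_ne_zero.mpr n.factorial_ne_zero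
  have h2Ik : ((2 : ℂ) * I) ^ k ≠ 0 := pow_ne_zero _ (mul_ne_zero two_ne_zero I_ne_zero)
  -- reflection identity
  have hrefl : ∀ j, j ≤ k →
      ((k.choose (k - j) : ℂ)) * (-1) ^ ((k - j) + k) * (2 * ((k - j : ℕ) : ℂ) - k) ^ n
        = (-1) ^ (n + k) * ((k.choose j : ℂ) * (-1) ^ (j + k) * (2 * (j : ℂ) - k) ^ n) := by
    intro j hj
    have h1 : (-1 : ℂ) ^ (k - j) = (-1) ^ k * (-1) ^ j := by
      have he : (-1 : ℂ) ^ (j + j) = 1 := Even.neg_one_pow ⟨j, rfl⟩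
      calc (-1 : ℂ) ^ (k - j) = (-1) ^ (k - j) * (-1) ^ (j + j) := by rw [he, mul_one]
        _ = (-1 : ℂ) ^ (k + j) := by rw [← pow_add]; congr 1; omega
        _ = (-1 : ℂ) ^ k * (-1) ^ j := pow_add _ _ _
    have h3 : (2 * ((k : ℂ) - j) - k) = -(2 * (j : ℂ) - k) := by ring
    rw [Nat.choose_symm hj, Nat.cast_sub hj, h3, neg_pow (2 * (j : ℂ) - k), pow_add, h1,
      pow_add, pow_add]
    ring
  apply Complex.ofReal_injective
  have hmap : ((PowerSeries.coeff n ((PowerSeries.sin ℝ) ^ k) : ℝ) : ℂ)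
      = PowerSeries.coeff n (PowerSeries.sin ℂ ^ k) := by
    rw [← PowerSeries.map_sin (algebraMap ℝ ℂ), ← map_pow, PowerSeries.coeff_map]
    rfl
  push_cast
  rw [hmap]
  have hmaster := coeff_sin_pow_complex n k
  rcases Nat.even_or_odd (n - k) with he | ho
  · -- even case
    have hnk : Even (n + k) := by
      obtain ⟨t, ht⟩ := he
      exact ⟨t + k, by omega⟩
    have hone : (-1 : ℂ) ^ (n + k) = 1 := hnk.neg_one_pow
    -- the full sum is twice the half sum
    have hsplit : ∑ m ∈ Finset.range (k + 1),
          (k.choose m : ℂ) * (-1) ^ (m + k) * (2 * (m : ℂ) - k) ^ n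
        = 2 * ∑ m ∈ Finset.range (k / 2 + 1),
            (k.choose m : ℂ) * (-1) ^ (m + k) * (2 * (m : ℂ) - k) ^ n := by
      have h1 : ∑ m ∈ Finset.range (k / 2 + 1),
            (k.choose m : ℂ) * (-1) ^ (m + k) * (2 * (m : ℂ) - k) ^ n +
          ∑ m ∈ Finset.Ico (k / 2 + 1) (k + 1),
            (k.choose m : ℂ) * (-1) ^ (m + k) * (2 * (m : ℂ) - k) ^ n
          = ∑ m ∈ Finset.range (k + 1),
            (k.choose m : ℂ) * (-1) ^ (m + k) * (2 * (m : ℂ) - k) ^ n := by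
        simp only [Finset.range_eq_Ico]
        exact Finset.sum_Ico_consecutive _ (Nat.zero_le _) (by omega)
      have h2 : ∑ m ∈ Finset.Ico (k / 2 + 1) (k + 1),
            (k.choose m : ℂ) * (-1) ^ (m + k) * (2 * (m : ℂ) - k) ^ n
          = ∑ m ∈ Finset.range (k - k / 2),
            (k.choose m : ℂ) * (-1) ^ (m + k) * (2 * (m : ℂ) - k) ^ n := by
        refine Finset.sum_nbij' (fun j => k - j) (fun m => k - m) ?_ ?_ ?_ ?_ ?_
        · intro a ha
          simp only [Finset.mem_Ico] at ha
          simp only [Finset.mem_range]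
          omega
        · intro a ha
          simp only [Finset.mem_range] at ha
          simp only [Finset.mem_Ico]
          omega
        · intro a ha
          simp only [Finset.mem_Ico] at ha
          show k - (k - a) = a
          omega
        · intro a ha
          simp only [Finset.mem_range] at ha
          show k - (k - a) = a
          omega
        · intro a ha
          simp only [Finset.mem_Ico] at ha
          have ha' : a ≤ k := by omega
          have h5 := hrefl a ha'
          rw [hone, one_mul] at h5
          exact h5.symm
      have h3 : ∑ m ∈ Finset.range (k - k / 2),
            (k.choose m : ℂ) * (-1) ^ (m + k) * (2 * (m : ℂ) - k) ^ n
          = ∑ m ∈ Finset.range (k / 2 + 1),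
            (k.choose m : ℂ) * (-1) ^ (m + k) * (2 * (m : ℂ) - k) ^ n := by
        refine Finset.sum_subset (Finset.range_subset_range.mpr (by omega)) ?_
        intro x hx hnx
        simp only [Finset.mem_range] at hx hnx
        have hx2 : 2 * x = k := by omega
        have h0 : (2 * (x : ℂ) - k) = 0 := by
          have : ((2 * x : ℕ) : ℂ) = (k : ℂ) := by rw [hx2]
          push_cast at this
          linear_combination this
        rw [h0, zero_pow (by omega : n ≠ 0), mul_zero]
      rw [← h1, h2, h3]; ring
    have hIn : (I : ℂ) ^ n = I ^ k * (-1) ^ ((n - k) / 2) := by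
      obtain ⟨t, ht⟩ := he
      have h6 : (n - k) / 2 = t := by omega
      have h7 : n = k + 2 * t := by omega
      rw [h6, h7, pow_add, pow_mul, I_sq]
    rw [hsplit, hIn] at hmaster
    -- transform the RHS sum
    have hsum : ∑ m ∈ Finset.range (k / 2 + 1),
          (k.choose m : ℂ) * (2 * (m : ℂ) - k) ^ n * (-1) ^ ((n + k) / 2 - m)
        = (-1) ^ ((n - k) / 2) * ∑ m ∈ Finset.range (k / 2 + 1),
            (k.choose m : ℂ) * (-1) ^ (m + k) * (2 * (m : ℂ) - k) ^ n := by
      rw [Finset.mul_sum]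
      refine Finset.sum_congr rfl fun m hm => ?_
      have hm' : m ≤ k / 2 := by simpa [Nat.lt_succ_iff] using hm
      obtain ⟨t, ht⟩ := he
      have e1 : (n + k) / 2 - m = (n - k) / 2 + (k - m) := by omega
      have e2 : (-1 : ℂ) ^ (k - m) = (-1) ^ (m + k) := by
        rw [show m + k = (k - m) + 2 * m by omega, pow_add, pow_mul]
        norm_num
      rw [e1, pow_add, e2]
      ring
    rw [hsum]
    have hek : (-1 : ℂ) ^ (n - k) = 1 := he.neg_one_pow
    rw [hek]
    have hIk : (I : ℂ) ^ k ≠ 0 := pow_ne_zero _ I_ne_zero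
    have h2k : ((2 : ℂ)) ^ k ≠ 0 := pow_ne_zero _ two_ne_zero
    have h8 : (I : ℂ) ^ k * (2 ^ k * PowerSeries.coeff n (PowerSeries.sin ℂ ^ k))
        = I ^ k * ((-1) ^ ((n - k) / 2) * ((n.factorial : ℂ))⁻¹ *
            (2 * ∑ m ∈ Finset.range (k / 2 + 1),
              (k.choose m : ℂ) * (-1) ^ (m + k) * (2 * (m : ℂ) - k) ^ n)) := by
      rw [mul_pow] at hmaster
      linear_combination hmaster
    have h9 := mul_left_cancel₀ hIk h8
    field_simp at h9 ⊢
    linear_combination h9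
  · -- odd case
    have hnk : Odd (n + k) := by
      obtain ⟨t, ht⟩ := ho
      exact ⟨t + k, by omega⟩
    have hSz : ∑ m ∈ Finset.range (k + 1),
        (k.choose m : ℂ) * (-1) ^ (m + k) * (2 * (m : ℂ) - k) ^ n = 0 := by
      have hS : ∑ m ∈ Finset.range (k + 1),
            (k.choose m : ℂ) * (-1) ^ (m + k) * (2 * (m : ℂ) - k) ^ n
          = (-1) ^ (n + k) * ∑ m ∈ Finset.range (k + 1),
              (k.choose m : ℂ) * (-1) ^ (m + k) * (2 * (m : ℂ) - k) ^ n := by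
        conv_lhs => rw [← Finset.sum_range_reflect]
        rw [Finset.mul_sum]
        refine Finset.sum_congr rfl fun j hj => ?_
        have hj' : j ≤ k := by simpa [Nat.lt_succ_iff] using hj
        rw [show k + 1 - 1 - j = k - j by omega]
        exact hrefl j hj'
      rw [hnk.neg_one_pow] at hS
      have h0 : (2 : ℂ) * ∑ m ∈ Finset.range (k + 1),
          (k.choose m : ℂ) * (-1) ^ (m + k) * (2 * (m : ℂ) - k) ^ n = 0 := by
        linear_combination hS
      exact (mul_eq_zero.mp h0).resolve_left two_ne_zero
    rw [hSz, mul_zero] at hmaster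
    have hc0 : PowerSeries.coeff n (PowerSeries.sin ℂ ^ k) = 0 :=
      (mul_eq_zero.mp hmaster).resolve_left h2Ik
    rw [hc0, ho.neg_one_pow]
    norm_num
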